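/- Let V, Q be finite-dimensional real Hilbert spaces, B : V → Q linear surjective, f : V → ℝ differentiable with 1·(1/2)‖u−v‖²_{I_V} ≤ D_f(u,v) ≤ L_f·(1/2)‖u−v‖²_{I_V} for an SPD operator I_V (i.e., μ_{f,I_V} = 1). Let (u*, p*) be a saddle point with ∇f(u*) + Bᵀp* = 0 and Bu* = b. Let S = B I_V⁻¹ Bᵀ, and let S̃, I_Q be SPD operators on Q with μ = λ_min(S̃⁻¹S) and γ = β μ where β = 1/(2 L_f). Define G^u(u,p) = −∇f(u) − Bᵀp, G^p(u,p) = Bu − b − B I_V⁻¹(∇f(u) + Bᵀp), and the Lyapunov gradient terms ∂_u E = ∇f(u) − ∇f(u*), ∂_p E = I_Q(p − p*). Then −⟨∂_u E, I_V⁻¹ G^u(u,p)⟩ − ⟨∂_p E, I_Q⁻¹ G^p(u,p)⟩ − (γ/2)‖p − p*‖²_{S̃ − I_Q} ≥ (β/2)‖∇f(u) − ∇f(u*)‖²_{I_V⁻¹} + (γ/2)‖p − p*‖²_{I_Q} for all u ∈ V, p ∈ Q. -/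

import Mathlib

open RealInnerProductSpace

lemma scalar_key (Lf β A C EE P Q R : ℝ) (hLf : 1 ≤ Lf) (hβ : β = 1/(2*Lf))
    (h1 : EE ≤ Q) (h2 : A ≤ Lf * Q)
    (hg : ∀ x y z : ℝ, 0 ≤ x^2*A + y^2*C + z^2*EE + 2*(x*y)*P + 2*(x*z)*Q + 2*(y*z)*R) :
    β/2*A ≤ A + 2*P + (1 - β/2)*C - R := by
  have hLf0 : (0:ℝ) < Lf := lt_of_lt_of_le one_pos hLf
  have hb0 : 0 < β := by rw [hβ]; positivity
  have hb2 : β ≤ 1/2 := by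
    rw [hβ, div_le_div_iff₀ (by positivity) (by norm_num)]
    nlinarith
  have hβLf : 2*β*Lf = 1 := by rw [hβ]; field_simp
  have h2' : 2*β*A ≤ Q := by
    calc 2*β*A ≤ 2*β*(Lf*Q) := by
              exact mul_le_mul_of_nonneg_left h2 (by positivity)
      _ = (2*β*Lf)*Q := by ring
      _ = Q := by rw [hβLf]; ring
  have g1 := hg (2*(1+β+β^2)) 2 (-(1+β))
  have g2 := hg 0 (1+β-β^2) (-β)
  have g3 := hg 0 0 1
  have hP2 : (0:ℝ) < 1+β-β^2 := by nlinarith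
  have hM : (0:ℝ) < 4*(1+β+β^2)*(1+β-β^2) := by positivity
  have t1 : 0 ≤ (1+β-β^2) * ((2*(1+β+β^2))^2*A + (2:ℝ)^2*C + (-(1+β))^2*EE
      + 2*((2*(1+β+β^2))*2)*P + 2*((2*(1+β+β^2))*(-(1+β)))*Q + 2*(2*(-(1+β)))*R) :=
    mul_nonneg hP2.le g1
  have t2 : 0 ≤ (2*β) * ((0:ℝ)^2*A + (1+β-β^2)^2*C + (-β)^2*EE
      + 2*(0*(1+β-β^2))*P + 2*(0*(-β))*Q + 2*((1+β-β^2)*(-β))*R) :=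
    mul_nonneg (by positivity) g2
  have t3 : 0 ≤ (β + 3*β^2 + β^3 - 2*β^5) * ((0:ℝ)^2*A + (0:ℝ)^2*C + (1:ℝ)^2*EE
      + 2*((0:ℝ)*0)*P + 2*((0:ℝ)*1)*Q + 2*((0:ℝ)*1)*R) :=
    mul_nonneg (by nlinarith) g3
  have t4 : 0 ≤ (1 + 4*β + 5*β^2 + 2*β^3 - β^4 - 2*β^5) * (Q - EE) := by
    have h : (1 + 4*β + 5*β^2 + 2*β^3 - β^4 - 2*β^5)
        = (4*(1+β+β^2)*(1+β-β^2)) * (1/4+β/2) := by ring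
    rw [h]; exact mul_nonneg (by positivity) (by linarith)
  have t5 : 0 ≤ (3 + 8*β + 7*β^2 + 2*β^3 - 3*β^4 - 2*β^5) * (Q - 2*β*A) := by
    have h : (3 + 8*β + 7*β^2 + 2*β^3 - 3*β^4 - 2*β^5)
        = (4*(1+β+β^2)*(1+β-β^2)) * (3/4+β/2) := by ring
    rw [h]; exact mul_nonneg (by positivity) (by linarith)
  have key : 0 ≤ (4*(1+β+β^2)*(1+β-β^2)) * (A + 2*P + (1 - β/2)*C - R - β/2*A) := by
    have id1 : (4*(1+β+β^2)*(1+β-β^2)) * (A + 2*P + (1 - β/2)*C - R - β/2*A)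
        = (1+β-β^2) * ((2*(1+β+β^2))^2*A + (2:ℝ)^2*C + (-(1+β))^2*EE
            + 2*((2*(1+β+β^2))*2)*P + 2*((2*(1+β+β^2))*(-(1+β)))*Q + 2*(2*(-(1+β)))*R)
          + (2*β) * ((0:ℝ)^2*A + (1+β-β^2)^2*C + (-β)^2*EE
            + 2*(0*(1+β-β^2))*P + 2*(0*(-β))*Q + 2*((1+β-β^2)*(-β))*R)
          + (β + 3*β^2 + β^3 - 2*β^5) * ((0:ℝ)^2*A + (0:ℝ)^2*C + (1:ℝ)^2*EE
            + 2*((0:ℝ)*0)*P + 2*((0:ℝ)*1)*Q + 2*((0:ℝ)*1)*R)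
          + (1 + 4*β + 5*β^2 + 2*β^3 - β^4 - 2*β^5) * (Q - EE)
          + (3 + 8*β + 7*β^2 + 2*β^3 - 3*β^4 - 2*β^5) * (Q - 2*β*A) := by ring
    rw [id1]
    have := add_nonneg (add_nonneg (add_nonneg (add_nonneg t1 t2) t3) t4) t5
    linarith
  have hX := (mul_nonneg_iff_of_pos_left hM).mp key
  linarith

private def Syn (m : ℕ) : Type := EuclideanSpace ℝ (Fin m)

lemma spectral_key {m : ℕ}
    (M T : EuclideanSpace ℝ (Fin m) →ₗ[ℝ] EuclideanSpace ℝ (Fin m))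
    (hMsym : ∀ x y, ⟪M x, y⟫ = ⟪x, M y⟫) (hMpos : ∀ x, x ≠ 0 → 0 < ⟪M x, x⟫)
    (hsym : ∀ x y, ⟪M (T x), y⟫ = ⟪x, M (T y)⟫)
    (q : EuclideanSpace ℝ (Fin m)) :
    sInf (spectrum ℝ (T : Module.End ℝ (EuclideanSpace ℝ (Fin m)))) * ⟪M q, q⟫
      ≤ ⟪M (T q), q⟫ := by
  classical
  letI : AddCommGroup (Syn m) := inferInstanceAs (AddCommGroup (EuclideanSpace ℝ (Fin m)))
  letI : Module ℝ (Syn m) := inferInstanceAs (Module ℝ (EuclideanSpace ℝ (Fin m)))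
  letI core : InnerProductSpace.Core ℝ (Syn m) :=
    { inner := fun x y => ⟪M x, y⟫
      conj_inner_symm := fun x y => by
        simp only [starRingEnd_apply, star_trivial]
        exact (real_inner_comm (M y) x).symm.trans (hMsym x y).symm
      re_inner_nonneg := fun x => by
        rcases eq_or_ne x 0 with h | h
        · simp [h]; exact le_of_eq (inner_zero_right (M 0)).symm
        · exact (hMpos x h).le
      add_left := fun x y z => by
        exact (congrArg (fun t : EuclideanSpace ℝ (Fin m) => ⟪t, z⟫) (M.map_add x y)).trans (inner_add_left _ _ _)
      smul_left := fun x y r => by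
        simp only [conj_trivial]
        exact (congrArg (fun t : EuclideanSpace ℝ (Fin m) => ⟪t, y⟫) (M.map_smul r x)).trans (real_inner_smul_left _ _ _)
      definite := fun x hx => by
        by_contra h
        exact absurd hx (ne_of_gt (hMpos x h)) }
  letI : NormedAddCommGroup (Syn m) := core.toNormedAddCommGroup
  letI : InnerProductSpace ℝ (Syn m) := InnerProductSpace.ofCore core.toCore
  letI : FiniteDimensional ℝ (Syn m) :=
    inferInstanceAs (FiniteDimensional ℝ (EuclideanSpace ℝ (Fin m)))
  let T' : Syn m →ₗ[ℝ] Syn m := T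
  have hT' : T'.IsSymmetric := by
    intro x y
    show ⟪M (T x), y⟫ = ⟪M x, T y⟫
    exact (hsym x y).trans (hMsym x (T y)).symm
  have hn : Module.finrank ℝ (Syn m) = m := by
    have : Module.finrank ℝ (Syn m)
        = Module.finrank ℝ (EuclideanSpace ℝ (Fin m)) := rfl
    rw [this, finrank_euclideanSpace_fin]
  set bb := hT'.eigenvectorBasis hn with hbb
  set lam := hT'.eigenvalues hn with hlam
  have happ : ∀ i, T' (bb i) = (lam i) • bb i := fun i =>
    hT'.apply_eigenvectorBasis hn i
  have hmem : ∀ i, lam i ∈ spectrum ℝ (T : Module.End ℝ (EuclideanSpace ℝ (Fin m))) := by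
    intro i
    exact Module.End.HasEigenvalue.mem_spectrum (hT'.hasEigenvalue_eigenvalues hn i)
  have hbdd : BddBelow (spectrum ℝ (T : Module.End ℝ (EuclideanSpace ℝ (Fin m)))) :=
    (Module.End.finite_spectrum _).bddBelow
  set μ := sInf (spectrum ℝ (T : Module.End ℝ (EuclideanSpace ℝ (Fin m)))) with hμ
  have hμle : ∀ i, μ ≤ lam i := fun i => csInf_le hbdd (hmem i)
  -- Parseval expansions in the Syn inner product
  let q' : Syn m := q
  have e1 : ∑ i, ⟪q', bb i⟫ * ⟪bb i, q'⟫ = ⟪q', q'⟫ := bb.sum_inner_mul_inner q' q'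
  have e2 : ∑ i, ⟪q', bb i⟫ * ⟪bb i, T' q'⟫ = ⟪q', T' q'⟫ := bb.sum_inner_mul_inner q' (T' q')
  have e2' : ∀ i, ⟪bb i, T' q'⟫ = lam i * ⟪bb i, q'⟫ := by
    intro i
    rw [← hT' (bb i) q', happ i, real_inner_smul_left]
  have goal1 : μ * ⟪q', q'⟫ ≤ ⟪q', T' q'⟫ := by
    rw [← e1, ← e2, Finset.mul_sum]
    apply Finset.sum_le_sum
    intro i _
    rw [e2' i]
    have hc : ⟪bb i, q'⟫ = ⟪q', bb i⟫ := real_inner_comm _ _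
    rw [hc]
    have hsq : 0 ≤ ⟪q', bb i⟫ * ⟪q', bb i⟫ := mul_self_nonneg _
    nlinarith [mul_le_mul_of_nonneg_right (hμle i) hsq]
  have hq1 : ⟪q', q'⟫ = ⟪M q, q⟫ := rfl
  have hq2 : ⟪q', T' q'⟫ = ⟪M q, T q⟫ := rfl
  rw [hq1, hq2] at goal1
  calc μ * ⟪M q, q⟫ ≤ ⟪M q, T q⟫ := goal1
    _ = ⟪M (T q), q⟫ := by rw [hMsym, real_inner_comm]

/-- Discrete strong Lyapunov property (Lemma 6.4 with `μ_{f,I_V} = 1`). -/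
theorem stmt_10 {n m : ℕ}
    (f : EuclideanSpace ℝ (Fin n) → ℝ) (hf : Differentiable ℝ f)
    (B : EuclideanSpace ℝ (Fin n) →ₗ[ℝ] EuclideanSpace ℝ (Fin m))
    (hBsurj : Function.Surjective B)
    (Bt : EuclideanSpace ℝ (Fin m) →ₗ[ℝ] EuclideanSpace ℝ (Fin n))
    (hBt : ∀ v q, ⟪B v, q⟫ = ⟪v, Bt q⟫)
    (IV IVinv : EuclideanSpace ℝ (Fin n) →ₗ[ℝ] EuclideanSpace ℝ (Fin n))
    (hIVsym : ∀ x y, ⟪IV x, y⟫ = ⟪x, IV y⟫) (hIVpos : ∀ x, x ≠ 0 → 0 < ⟪IV x, x⟫)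
    (hIVinv : IVinv ∘ₗ IV = LinearMap.id) (hIVinv' : IV ∘ₗ IVinv = LinearMap.id)
    (Lf : ℝ) (hLf : 1 ≤ Lf)
    (hlow : ∀ u v, 1/2 * ⟪IV (u - v), u - v⟫ ≤ f u - f v - ⟪gradient f v, u - v⟫)
    (hup : ∀ u v, f u - f v - ⟪gradient f v, u - v⟫ ≤ Lf/2 * ⟪IV (u - v), u - v⟫)
    (ustar : EuclideanSpace ℝ (Fin n)) (pstar b : EuclideanSpace ℝ (Fin m))
    (hsaddle : gradient f ustar + Bt pstar = 0) (hconstraint : B ustar = b)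
    (S : EuclideanSpace ℝ (Fin m) →ₗ[ℝ] EuclideanSpace ℝ (Fin m))
    (hS : S = B ∘ₗ IVinv ∘ₗ Bt)
    (St Stinv IQ IQinv : EuclideanSpace ℝ (Fin m) →ₗ[ℝ] EuclideanSpace ℝ (Fin m))
    (hStsym : ∀ x y, ⟪St x, y⟫ = ⟪x, St y⟫) (hStpos : ∀ x, x ≠ 0 → 0 < ⟪St x, x⟫)
    (hIQsym : ∀ x y, ⟪IQ x, y⟫ = ⟪x, IQ y⟫) (hIQpos : ∀ x, x ≠ 0 → 0 < ⟪IQ x, x⟫)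
    (hStinv : Stinv ∘ₗ St = LinearMap.id) (hStinv' : St ∘ₗ Stinv = LinearMap.id)
    (hIQinv : IQinv ∘ₗ IQ = LinearMap.id) (hIQinv' : IQ ∘ₗ IQinv = LinearMap.id)
    (μ β γ : ℝ)
    (hμ : μ = sInf (spectrum ℝ (Stinv ∘ₗ S : Module.End ℝ (EuclideanSpace ℝ (Fin m)))))
    (hβ : β = 1/(2*Lf)) (hγ : γ = β * μ) :
    ∀ (u : EuclideanSpace ℝ (Fin n)) (p : EuclideanSpace ℝ (Fin m)),
      -⟪gradient f u - gradient f ustar, IVinv (-(gradient f u) - Bt p)⟫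
        - ⟪IQ (p - pstar), IQinv (B u - b - B (IVinv (gradient f u + Bt p)))⟫
        - γ/2 * ⟪St (p - pstar) - IQ (p - pstar), p - pstar⟫
      ≥ β/2 * ⟪IVinv (gradient f u - gradient f ustar),
            gradient f u - gradient f ustar⟫
        + γ/2 * ⟪IQ (p - pstar), p - pstar⟫ := by
  intro u p
  have hLf0 : (0:ℝ) < Lf := lt_of_lt_of_le one_pos hLf
  have hb0 : (0:ℝ) < β := by rw [hβ]; exact div_pos one_pos (by linarith)
  -- basic inverse identities
  have hIVIVinv : ∀ x, IV (IVinv x) = x := fun x => LinearMap.congr_fun hIVinv' x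
  have hIVinvIV : ∀ x, IVinv (IV x) = x := fun x => LinearMap.congr_fun hIVinv x
  have hIQIQinv : ∀ x, IQ (IQinv x) = x := fun x => LinearMap.congr_fun hIQinv' x
  have hStStinv : ∀ x, St (Stinv x) = x := fun x => LinearMap.congr_fun hStinv' x
  have hIVis : ∀ a c, ⟪IVinv a, c⟫ = ⟪a, IVinv c⟫ := by
    intro a c
    calc ⟪IVinv a, c⟫ = ⟪IVinv a, IV (IVinv c)⟫ := by rw [hIVIVinv]
      _ = ⟪IV (IVinv a), IVinv c⟫ := (hIVsym _ _).symm
      _ = ⟪a, IVinv c⟫ := by rw [hIVIVinv]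
  have posIV : ∀ x, 0 ≤ ⟪IV x, x⟫ := by
    intro x
    rcases eq_or_ne x 0 with h | h
    · simp [h]
    · exact (hIVpos x h).le
  have posIVinv : ∀ x, 0 ≤ ⟪IVinv x, x⟫ := by
    intro x
    have h2 : ⟪IV (IVinv x), IVinv x⟫ = ⟪IVinv x, x⟫ := by
      rw [hIVsym, hIVIVinv]
    rw [← h2]
    exact posIV _
  -- abbreviations
  set d : EuclideanSpace ℝ (Fin n) := gradient f u - gradient f ustar with hd
  set w : EuclideanSpace ℝ (Fin n) := u - ustar with hw
  set q : EuclideanSpace ℝ (Fin m) := p - pstar with hq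
  set c : EuclideanSpace ℝ (Fin n) := Bt q with hc
  set ee : EuclideanSpace ℝ (Fin n) := IV w with hee
  -- conversions
  have hRe : ⟪IVinv c, ee⟫ = ⟪c, w⟫ := by rw [hIVis, hee, hIVinvIV]
  have hQe : ⟪IVinv d, ee⟫ = ⟪d, w⟫ := by rw [hIVis, hee, hIVinvIV]
  have hEe : ⟪IVinv ee, ee⟫ = ⟪IV w, w⟫ := by
    rw [hee, hIVinvIV, real_inner_comm]
  -- gram positivity
  have hgram : ∀ x y z : ℝ, 0 ≤ x^2*⟪IVinv d, d⟫ + y^2*⟪IVinv c, c⟫ + z^2*⟪IVinv ee, ee⟫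
      + 2*(x*y)*⟪IVinv d, c⟫ + 2*(x*z)*⟪IVinv d, ee⟫ + 2*(y*z)*⟪IVinv c, ee⟫ := by
    intro x y z
    have h0 := posIVinv (x•d + y•c + z•ee)
    have hcd : ⟪IVinv c, d⟫ = ⟪IVinv d, c⟫ := by rw [hIVis, real_inner_comm]
    have hed : ⟪IVinv ee, d⟫ = ⟪IVinv d, ee⟫ := by rw [hIVis, real_inner_comm]
    have hec : ⟪IVinv ee, c⟫ = ⟪IVinv c, ee⟫ := by rw [hIVis, real_inner_comm]
    have hexp : ⟪IVinv (x•d + y•c + z•ee), x•d + y•c + z•ee⟫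
        = x^2*⟪IVinv d, d⟫ + y^2*⟪IVinv c, c⟫ + z^2*⟪IVinv ee, ee⟫
          + 2*(x*y)*⟪IVinv d, c⟫ + 2*(x*z)*⟪IVinv d, ee⟫ + 2*(y*z)*⟪IVinv c, ee⟫ := by
      simp only [map_add, map_smul, inner_add_left, inner_add_right,
        real_inner_smul_left, real_inner_smul_right]
      rw [hcd, hed, hec]
      ring
    rw [hexp] at h0
    exact h0
  -- strong monotonicity : h1
  have h1' : ⟪IVinv ee, ee⟫ ≤ ⟪IVinv d, ee⟫ := by
    rw [hEe, hQe]
    have s1 := hlow u ustar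
    have s2 := hlow ustar u
    have hneg : ustar - u = -(u - ustar) := by abel
    rw [hneg, map_neg, inner_neg_neg, inner_neg_right] at s2
    have hdw : ⟪d, w⟫ = ⟪gradient f u, w⟫ - ⟪gradient f ustar, w⟫ := by
      rw [hd, inner_sub_left]
    rw [hdw]
    rw [hw] at *
    linarith
  -- cocoercivity : h2
  have h2' : ⟪IVinv d, d⟫ ≤ Lf * ⟪IVinv d, ee⟫ := by
    rw [hQe]
    set v : EuclideanSpace ℝ (Fin n) := IVinv d with hv
    have hIVv : IV v = d := by rw [hv, hIVIVinv]
    have hvd : ⟪d, v⟫ = ⟪IVinv d, d⟫ := by rw [hv, real_inner_comm]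
    have c2 := hup (u - Lf⁻¹ • v) u
    have c1 := hlow (u - Lf⁻¹ • v) ustar
    have c4 := hup (ustar + Lf⁻¹ • v) ustar
    have c3 := hlow (ustar + Lf⁻¹ • v) u
    have hz1 : u - Lf⁻¹ • v - u = -(Lf⁻¹ • v) := by abel
    have hz2 : u - Lf⁻¹ • v - ustar = w - Lf⁻¹ • v := by rw [hw]; abel
    have hz3 : ustar + Lf⁻¹ • v - ustar = Lf⁻¹ • v := by abel
    have hz4 : ustar + Lf⁻¹ • v - u = Lf⁻¹ • v - w := by rw [hw]; abel
    rw [hz1] at c2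
    rw [hz2] at c1
    rw [hz3] at c4
    rw [hz4] at c3
    have e2 : Lf/2 * ⟪IV (-(Lf⁻¹ • v)), -(Lf⁻¹ • v)⟫ = Lf⁻¹/2 * ⟪d, v⟫ := by
      rw [map_neg, inner_neg_neg, map_smul, real_inner_smul_left,
        real_inner_smul_right, hIVv]
      field_simp
    have e4 : Lf/2 * ⟪IV (Lf⁻¹ • v), Lf⁻¹ • v⟫ = Lf⁻¹/2 * ⟪d, v⟫ := by
      rw [map_smul, real_inner_smul_left, real_inner_smul_right, hIVv]
      field_simp
    rw [e2] at c2
    rw [e4] at c4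
    have e2' : ⟪gradient f u, -(Lf⁻¹ • v)⟫ = -(Lf⁻¹ * ⟪gradient f u, v⟫) := by
      rw [inner_neg_right, real_inner_smul_right]
    have e1' : ⟪gradient f ustar, w - Lf⁻¹ • v⟫
        = ⟪gradient f ustar, w⟫ - Lf⁻¹ * ⟪gradient f ustar, v⟫ := by
      rw [inner_sub_right, real_inner_smul_right]
    have e4' : ⟪gradient f ustar, Lf⁻¹ • v⟫ = Lf⁻¹ * ⟪gradient f ustar, v⟫ := by
      rw [real_inner_smul_right]
    have e3' : ⟪gradient f u, Lf⁻¹ • v - w⟫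
        = Lf⁻¹ * ⟪gradient f u, v⟫ - ⟪gradient f u, w⟫ := by
      rw [inner_sub_right, real_inner_smul_right]
    rw [e2'] at c2
    rw [e1'] at c1
    rw [e4'] at c4
    rw [e3'] at c3
    have p1 : 0 ≤ 1/2 * ⟪IV (w - Lf⁻¹ • v), w - Lf⁻¹ • v⟫ := by
      have := posIV (w - Lf⁻¹ • v); linarith
    have p3 : 0 ≤ 1/2 * ⟪IV (Lf⁻¹ • v - w), Lf⁻¹ • v - w⟫ := by
      have := posIV (Lf⁻¹ • v - w); linarith
    have hsplit : Lf⁻¹ * ⟪gradient f u, v⟫ - Lf⁻¹ * ⟪gradient f ustar, v⟫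
        = Lf⁻¹ * ⟪d, v⟫ := by
      rw [hd, inner_sub_left]; ring
    have hdw2 : ⟪d, w⟫ = ⟪gradient f u, w⟫ - ⟪gradient f ustar, w⟫ := by
      rw [hd, inner_sub_left]
    have h5 : Lf⁻¹ * ⟪d, v⟫ ≤ ⟪d, w⟫ := by
      rw [hdw2]
      linarith
    have h6 : Lf * (Lf⁻¹ * ⟪d, v⟫) ≤ Lf * ⟪d, w⟫ :=
      mul_le_mul_of_nonneg_left h5 hLf0.le
    have h7 : Lf * (Lf⁻¹ * ⟪d, v⟫) = ⟪d, v⟫ := by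
      field_simp
    rw [h7] at h6
    rw [← hvd]
    exact h6
  -- the scalar inequality
  have main := scalar_key Lf β ⟪IVinv d, d⟫ ⟪IVinv c, c⟫ ⟪IVinv ee, ee⟫
    ⟪IVinv d, c⟫ ⟪IVinv d, ee⟫ ⟪IVinv c, ee⟫ hLf hβ h1' h2' hgram
  -- spectral bound
  have hSsym : ∀ x y, ⟪St ((Stinv ∘ₗ S) x), y⟫ = ⟪x, St ((Stinv ∘ₗ S) y)⟫ := by
    intro x y
    have hSx : ∀ z, St ((Stinv ∘ₗ S) z) = S z := fun z => by
      rw [LinearMap.comp_apply, hStStinv]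
    rw [hSx x, hSx y]
    rw [hS]
    simp only [LinearMap.comp_apply]
    rw [hBt, hIVis, real_inner_comm]
    rw [← hBt]
    rw [real_inner_comm]
  have hspec := spectral_key St (Stinv ∘ₗ S) hStsym hStpos hSsym q
  rw [← hμ] at hspec
  have hStS : St ((Stinv ∘ₗ S) q) = S q := by rw [LinearMap.comp_apply, hStStinv]
  have hSqq : ⟪St ((Stinv ∘ₗ S) q), q⟫ = ⟪IVinv c, c⟫ := by
    rw [hStS, hS]
    simp only [LinearMap.comp_apply]
    rw [hBt, hc]
  rw [hSqq] at hspec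
  -- goal reduction
  have hsum : gradient f u + Bt p = d + c := by
    have h0 : d + c = gradient f u + Bt p - (gradient f ustar + Bt pstar) := by
      rw [hd, hc, hq, map_sub]; abel
    rw [hsaddle, sub_zero] at h0
    exact h0.symm
  have E1 : -⟪d, IVinv (-(gradient f u) - Bt p)⟫ = ⟪IVinv d, d⟫ + ⟪IVinv d, c⟫ := by
    have hng : -(gradient f u) - Bt p = -(d + c) := by rw [← hsum]; abel
    rw [hng, map_neg, inner_neg_right, neg_neg, map_add, inner_add_right,
      ← hIVis d d, ← hIVis d c]
  have hIQc : ∀ x, ⟪IQ q, IQinv x⟫ = ⟪q, x⟫ := by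
    intro x
    rw [hIQsym, hIQIQinv]
  have hX : B u - b - B (IVinv (gradient f u + Bt p)) = B w - B (IVinv (d + c)) := by
    rw [hsum, ← hconstraint, hw, map_sub]
  have E2 : -⟪IQ q, IQinv (B u - b - B (IVinv (gradient f u + Bt p)))⟫
      = ⟪IVinv d, c⟫ + ⟪IVinv c, c⟫ - ⟪IVinv c, ee⟫ := by
    rw [hX, hIQc, inner_sub_right]
    have hA : ⟪q, B w⟫ = ⟪IVinv c, ee⟫ := by
      rw [real_inner_comm, hBt, ← hc, hRe, real_inner_comm]
    have hB2 : ⟪q, B (IVinv (d + c))⟫ = ⟪IVinv d, c⟫ + ⟪IVinv c, c⟫ := by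
      rw [real_inner_comm, hBt, ← hc, map_add, inner_add_left]
    rw [hA, hB2]
    ring
  have E3 : γ/2 * ⟪St q - IQ q, q⟫ = γ/2 * ⟪St q, q⟫ - γ/2 * ⟪IQ q, q⟫ := by
    rw [inner_sub_left]; ring
  have hspec2 : γ/2 * ⟪St q, q⟫ ≤ β/2 * ⟪IVinv c, c⟫ := by
    have h0 : γ/2 * ⟪St q, q⟫ = β/2 * (μ * ⟪St q, q⟫) := by rw [hγ]; ring
    rw [h0]
    have := mul_le_mul_of_nonneg_left hspec (by linarith : (0:ℝ) ≤ β/2)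
    linarith
  rw [ge_iff_le]
  linarith [main, hspec2, E1, E2, E3]
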